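/- If a_1 < a_2 < ... < a_k are integers such that all differences a_j - a_i for 1 ≤ i < j ≤ k are pairwise distinct, and G is the graph on vertices v_0, v_1, ..., v_{n-1} consisting of the Hamilton cycle v_0 v_1 ... v_{n-1} v_0 together with the chords v_0 v_{a_i} for 1 < i < k (where a_1 = 1 and a_k = n-1), then no two cycles of G have the same length. -/

import Mathlib

/-- A finset of edges forms a cycle of the graph `G` if it is the edge set of some
cycle walk in `G`. -/
def IsCycleSet {V : Type*} [DecidableEq V] (G : SimpleGraph V) (s : Finset (Sym2 V)) : Prop :=
  ∃ (u : V) (w : G.Walk u u), w.IsCycle ∧ w.edges.toFinset = s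

open Fin.NatCast in
/-- the `m`-th edge of the Hamilton path `v_1 ... v_{n-1}` -/
def pe (n : ℕ) [NeZero n] (m : ℕ) : Sym2 (Fin n) := s((m : Fin n), ((m + 1 : ℕ) : Fin n))

/-- edges of the segment of the Hamilton path between `x` and `y` -/
def eseg (n : ℕ) [NeZero n] (x y : Fin n) : Finset (Sym2 (Fin n)) :=
  (Finset.Ico (min x.val y.val) (max x.val y.val)).image (pe n)

/-- If `a 0 < a 1 < ... < a (k-1)` are integers (in `{1, ..., n-1}`, with `a 0 = 1` and
`a (k-1) = n-1`) all of whose pairwise differences are distinct, then the graph on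
`v_0, ..., v_{n-1}` consisting of the Hamilton cycle `v_0 v_1 ... v_{n-1} v_0` together with
the chords `v_0 v_{a i}` has no two cycles of the same length. -/
theorem stmt0 (n k : ℕ) [NeZero n] (hn : 3 ≤ n) (hk : 2 ≤ k)
    (a : Fin k → Fin n) (hmono : StrictMono a)
    (h1 : (a ⟨0, by omega⟩ : ℕ) = 1) (hlast : (a ⟨k - 1, by omega⟩ : ℕ) = n - 1)
    (hsidon : ∀ i j i' j' : Fin k, i < j → i' < j' →
      (a j : ℕ) - (a i : ℕ) = (a j' : ℕ) - (a i' : ℕ) → i = i' ∧ j = j')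
    (G : SimpleGraph (Fin n))
    (hG : G = SimpleGraph.fromEdgeSet
      ({e | ∃ i : Fin n, e = s(i, i + 1)} ∪ {e | ∃ i : Fin k, e = s(0, a i)})) :
    ∀ s t : Finset (Sym2 (Fin n)), IsCycleSet G s → IsCycleSet G t →
      s.card = t.card → s = t := by
  -- basic bounds on `a`
  have ha1 : ∀ i : Fin k, 1 ≤ (a i).val := by
    intro i
    have := hmono.monotone (show (⟨0, by omega⟩ : Fin k) ≤ i by simp [Fin.le_def])
    rw [Fin.le_def, h1] at this
    exact this
  have hane0 : ∀ i : Fin k, a i ≠ 0 := by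
    intro i hi
    have := ha1 i
    rw [hi] at this
    simp at this
  have hkey : ∀ x : Fin n, (x + 1).val = x.val + 1 ∨ (x.val = n - 1 ∧ (x + 1).val = 0) := by
    intro x
    have hv : (x + 1).val = (x.val + 1) % n := by
      rw [Fin.val_add, Fin.val_one', Nat.mod_eq_of_lt (show 1 < n by omega)]
    rcases Nat.lt_or_ge (x.val + 1) n with h | h
    · left; rw [hv, Nat.mod_eq_of_lt h]
    · right
      have hx := x.isLt
      have : x.val + 1 = n := by omega
      constructor
      · omega
      · rw [hv, this, Nat.mod_self]
  -- adjacency between nonzero vertices: consecutive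
  have hAdj : ∀ u v : Fin n, G.Adj u v → u ≠ 0 → v ≠ 0 →
      (u.val + 1 = v.val ∨ v.val + 1 = u.val) := by
    intro u v huv hu hv
    rw [hG, SimpleGraph.fromEdgeSet_adj] at huv
    obtain ⟨hmem, hne⟩ := huv
    rcases hmem with ⟨i, hi⟩ | ⟨i, hi⟩
    · rw [Sym2.eq_iff] at hi
      rcases hi with ⟨h1', h2'⟩ | ⟨h1', h2'⟩
      · subst h1' h2'
        left
        rcases hkey u with h | ⟨_, h⟩
        · omega
        · exact absurd (Fin.ext h) hv
      · subst h1' h2'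
        right
        rcases hkey v with h | ⟨_, h⟩
        · omega
        · exact absurd (Fin.ext h) hu
    · rw [Sym2.eq_iff] at hi
      rcases hi with ⟨h1', _⟩ | ⟨_, h2'⟩
      · exact absurd h1' hu
      · exact absurd h2' hv
  -- adjacency with 0 lands in the image of `a`
  have hAdj0 : ∀ v : Fin n, G.Adj 0 v → ∃ i : Fin k, v = a i := by
    intro v hv
    have hvne : v ≠ 0 := hv.ne'
    rw [hG, SimpleGraph.fromEdgeSet_adj] at hv
    obtain ⟨hmem, hne⟩ := hv
    rcases hmem with ⟨i, hi⟩ | ⟨i, hi⟩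
    · rw [Sym2.eq_iff] at hi
      rcases hi with ⟨h1', h2'⟩ | ⟨h1', h2'⟩
      · refine ⟨⟨0, by omega⟩, ?_⟩
        rw [h2', ← h1']
        apply Fin.ext
        rw [h1]
        rcases hkey 0 with h | ⟨h0, _⟩
        · simpa using h
        · simp at h0; omega
      · refine ⟨⟨k - 1, by omega⟩, ?_⟩
        rw [h2']
        apply Fin.ext
        rw [hlast]
        have h0 : (i + 1).val = 0 := by rw [← h1']; rfl
        rcases hkey i with h | ⟨h, _⟩
        · rw [h0] at h; omega
        · exact h
    · rw [Sym2.eq_iff] at hi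
      rcases hi with ⟨_, h2'⟩ | ⟨h1', h2'⟩
      · exact ⟨i, h2'⟩
      · exact absurd h2' hvne
  -- walks avoiding 0 and level b stay above / below b
  have hLup : ∀ (x y : Fin n) (q : G.Walk x y) (b : ℕ), (0 : Fin n) ∉ q.support →
      (∀ v ∈ q.support, v.val ≠ b) → b < x.val → ∀ v ∈ q.support, b < v.val := by
    intro x y q
    induction q with
    | nil =>
      intro b h0 hb hx v hv
      rw [SimpleGraph.Walk.support_nil, List.mem_singleton] at hv
      subst hv; exact hx
    | @cons x x' y h p ih =>
      intro b h0 hb hx v hv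
      rw [SimpleGraph.Walk.support_cons] at h0 hb hv
      have hx0 : x ≠ 0 := fun e => h0 (by rw [← e]; exact List.mem_cons_self)
      have h0p : (0 : Fin n) ∉ p.support := fun e => h0 (List.mem_cons_of_mem _ e)
      have hx'0 : x' ≠ 0 := fun e => h0p (e ▸ p.start_mem_support)
      have hdiff := hAdj x x' h hx0 hx'0
      have hx'b : x'.val ≠ b := hb x' (List.mem_cons_of_mem _ p.start_mem_support)
      have hx'gt : b < x'.val := by omega
      rcases List.mem_cons.mp hv with rfl | hv
      · exact hx
      · exact ih b h0p (fun v hv => hb v (List.mem_cons_of_mem _ hv)) hx'gt v hv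
  have hLdown : ∀ (x y : Fin n) (q : G.Walk x y) (b : ℕ), (0 : Fin n) ∉ q.support →
      (∀ v ∈ q.support, v.val ≠ b) → x.val < b → ∀ v ∈ q.support, v.val < b := by
    intro x y q
    induction q with
    | nil =>
      intro b h0 hb hx v hv
      rw [SimpleGraph.Walk.support_nil, List.mem_singleton] at hv
      subst hv; exact hx
    | @cons x x' y h p ih =>
      intro b h0 hb hx v hv
      rw [SimpleGraph.Walk.support_cons] at h0 hb hv
      have hx0 : x ≠ 0 := fun e => h0 (by rw [← e]; exact List.mem_cons_self)
      have h0p : (0 : Fin n) ∉ p.support := fun e => h0 (List.mem_cons_of_mem _ e)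
      have hx'0 : x' ≠ 0 := fun e => h0p (e ▸ p.start_mem_support)
      have hdiff := hAdj x x' h hx0 hx'0
      have hx'b : x'.val ≠ b := hb x' (List.mem_cons_of_mem _ p.start_mem_support)
      have hx'lt : x'.val < b := by omega
      rcases List.mem_cons.mp hv with rfl | hv
      · exact hx
      · exact ih b h0p (fun v hv => hb v (List.mem_cons_of_mem _ hv)) hx'lt v hv
  -- a path avoiding 0 has the segment of the Hamilton path as edge set
  have hP : ∀ (x y : Fin n) (q : G.Walk x y), (0 : Fin n) ∉ q.support →
      q.support.Nodup → q.edges.toFinset = eseg n x y := by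
    intro x y q
    induction q with
    | nil =>
      intro _ _
      simp [eseg]
    | @cons x x' y h p ih =>
      intro h0 hnd
      rw [SimpleGraph.Walk.support_cons] at h0 hnd
      have hx0 : x ≠ 0 := fun e => h0 (by rw [← e]; exact List.mem_cons_self)
      have h0p : (0 : Fin n) ∉ p.support := fun e => h0 (List.mem_cons_of_mem _ e)
      have hx'0 : x' ≠ 0 := fun e => h0p (e ▸ p.start_mem_support)
      rw [List.nodup_cons] at hnd
      obtain ⟨hxp, hndp⟩ := hnd
      have hbne : ∀ v ∈ p.support, v.val ≠ x.val :=
        fun v hv e => hxp ((Fin.ext e : v = x) ▸ hv)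
      have hdiff := hAdj x x' h hx0 hx'0
      have hih := ih h0p hndp
      have hyp : y ∈ p.support := p.end_mem_support
      rw [SimpleGraph.Walk.edges_cons, List.toFinset_cons, hih]
      rcases hdiff with hup | hdown
      · -- x' = x + 1 : everything from here on is above x
        have hall := hLup x' y p x.val h0p hbne (by omega)
        have hy : x.val < y.val := hall y hyp
        have hx'y : x'.val ≤ y.val := by omega
        have hedge : s(x, x') = pe n x.val := by
          rw [pe, hup, Fin.cast_val_eq_self, Fin.cast_val_eq_self]
        rw [hedge, eseg, eseg]
        have hmin : min x.val y.val = x.val := by omega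
        have hmax : max x.val y.val = y.val := by omega
        have hmin' : min x'.val y.val = x.val + 1 := by omega
        have hmax' : max x'.val y.val = y.val := by omega
        rw [hmin, hmax, hmin', hmax']
        rw [show Finset.Ico x.val y.val = insert x.val (Finset.Ico (x.val + 1) y.val) by
          ext m; simp; omega]
        rw [Finset.image_insert]
      · -- x = x' + 1 : everything from here on is below x
        have hall := hLdown x' y p x.val h0p hbne (by omega)
        have hy : y.val < x.val := hall y hyp
        have hx'y : y.val ≤ x'.val := by
          have := hall x' p.start_mem_support; omega
        have hedge : s(x, x') = pe n x'.val := by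
          rw [pe, hdown, Fin.cast_val_eq_self, Fin.cast_val_eq_self]
          exact Sym2.eq_swap
        rw [hedge, eseg, eseg]
        have hmin : min x.val y.val = y.val := by omega
        have hmax : max x.val y.val = x.val := by omega
        have hmin' : min x'.val y.val = y.val := by omega
        have hmax' : max x'.val y.val = x'.val := by omega
        rw [hmin, hmax, hmin', hmax']
        rw [show Finset.Ico y.val x.val = insert x'.val (Finset.Ico y.val x'.val) by
          ext m; simp; omega]
        rw [Finset.image_insert]
  -- cardinality of a segment image
  have hEcard : ∀ lo hi : ℕ, hi ≤ n - 1 →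
      ((Finset.Ico lo hi).image (pe n)).card = hi - lo := by
    intro lo hi hhi
    rw [Finset.card_image_of_injOn, Nat.card_Ico]
    intro m hm m' hm' he
    rw [Finset.mem_coe, Finset.mem_Ico] at hm hm'
    have hmn : m < n := by omega
    have hm1n : m + 1 < n := by omega
    have hmn' : m' < n := by omega
    have hm1n' : m' + 1 < n := by omega
    rw [pe, pe, Sym2.eq_iff] at he
    rcases he with ⟨e1, _⟩ | ⟨e1, e2⟩
    · have := congrArg Fin.val e1
      rwa [Fin.val_cast_of_lt hmn, Fin.val_cast_of_lt hmn'] at this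
    · have t1 := congrArg Fin.val e1
      rw [Fin.val_cast_of_lt hmn, Fin.val_cast_of_lt hm1n'] at t1
      have t2 := congrArg Fin.val e2
      rw [Fin.val_cast_of_lt hm1n, Fin.val_cast_of_lt hmn'] at t2
      omega
  -- edges at 0 are not in segments bounded away from 0
  have hseg0 : ∀ lo hi : ℕ, 1 ≤ lo → hi ≤ n - 1 → ∀ z : Fin n,
      s((0 : Fin n), z) ∉ (Finset.Ico lo hi).image (pe n) := by
    intro lo hi hlo hhi z hmem
    rw [Finset.mem_image] at hmem
    obtain ⟨m, hm, he⟩ := hmem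
    rw [Finset.mem_Ico] at hm
    have hmn : m < n := by omega
    have hm1n : m + 1 < n := by omega
    rw [pe, Sym2.eq_iff] at he
    rcases he with ⟨e1, _⟩ | ⟨_, e2⟩
    · have := congrArg Fin.val e1
      rw [Fin.val_cast_of_lt hmn] at this
      simp at this
      omega
    · have := congrArg Fin.val e2
      rw [Fin.val_cast_of_lt hm1n] at this
      simp at this
  -- a walk from a vertex to itself with nodup support is nil
  have hnil : ∀ (x : Fin n) (p : G.Walk x x), p.support.Nodup → p.length = 0 := by
    intro x p hp
    cases p with
    | nil => rfl
    | cons h p' =>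
      rw [SimpleGraph.Walk.support_cons, List.nodup_cons] at hp
      exact absurd p'.end_mem_support hp.1
  -- classification of cycles
  have hcand : ∀ (u : Fin n) (w : G.Walk u u), w.IsCycle → ∃ i j : Fin k, i < j ∧
      w.edges.toFinset = insert s((0 : Fin n), a i) (insert s((0 : Fin n), a j)
        ((Finset.Ico (a i).val (a j).val).image (pe n))) := by
    intro u w hw
    have h0 : (0 : Fin n) ∈ w.support := by
      by_contra h0
      have h3 := hw.three_le_length
      cases w with
      | nil => simp at h3
      | @cons u x _ h p =>
        rw [SimpleGraph.Walk.support_cons] at h0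
        have hu0 : u ≠ 0 := fun e => h0 (by rw [← e]; exact List.mem_cons_self)
        have h0p : (0 : Fin n) ∉ p.support := fun e => h0 (List.mem_cons_of_mem _ e)
        have hx0 : x ≠ 0 := fun e => h0p (e ▸ p.start_mem_support)
        have hnd : p.support.Nodup := by
          have := hw.support_nodup
          rwa [SimpleGraph.Walk.support_cons, List.tail_cons] at this
        have hPe := hP x u p h0p hnd
        have hen : p.edges.Nodup := by
          have := hw.edges_nodup
          rw [SimpleGraph.Walk.edges_cons, List.nodup_cons] at this
          exact this.2
        have hlen : p.edges.toFinset.card = p.length := by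
          rw [List.toFinset_card_of_nodup hen, SimpleGraph.Walk.length_edges]
        have hcard : (eseg n x u).card = max x.val u.val - min x.val u.val := by
          rw [eseg]
          exact hEcard _ _ (by have := x.isLt; have := u.isLt; omega)
        have hdiff := hAdj u x h hu0 hx0
        rw [hPe, hcard] at hlen
        have hl3 : 3 ≤ p.length + 1 := h3
        have hu' := u.isLt
        have hx' := x.isLt
        omega
    obtain ⟨b, h, q, hw2⟩ := SimpleGraph.Walk.not_nil_iff.mp (hw.rotate h0).not_nil
    have hc2 : (SimpleGraph.Walk.cons h q).IsCycle := hw2 ▸ (hw.rotate h0)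
    have hedgeset : w.edges.toFinset = (SimpleGraph.Walk.cons h q).edges.toFinset := by
      rw [← hw2]
      exact (List.toFinset_eq_of_perm _ _ (w.rotate_edges 0 h0).perm).symm
    have hb0 : b ≠ 0 := h.ne'
    obtain ⟨c, h2, r, hrev⟩ := SimpleGraph.Walk.exists_eq_cons_of_ne h.ne q.reverse
    have hq : q = r.reverse.concat h2.symm := by
      rw [← SimpleGraph.Walk.reverse_reverse q, hrev, SimpleGraph.Walk.reverse_cons,
        SimpleGraph.Walk.concat_eq_append]
    -- support facts
    have hndq : q.support.Nodup := by
      have := hc2.support_nodup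
      rwa [SimpleGraph.Walk.support_cons, List.tail_cons] at this
    have hsupp : q.support = r.reverse.support.concat 0 := by
      rw [hq, SimpleGraph.Walk.support_concat, List.concat_eq_append]
    rw [hsupp, List.concat_eq_append, List.nodup_append] at hndq
    have hndr : r.reverse.support.Nodup := hndq.1
    have h0r : (0 : Fin n) ∉ r.reverse.support := by
      intro hmem
      exact hndq.2.2 0 hmem 0 (by simp) rfl
    -- edge set of the cycle
    have hE : (SimpleGraph.Walk.cons h q).edges.toFinset
        = insert s((0 : Fin n), b) (insert s((0 : Fin n), c) (eseg n b c)) := by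
      rw [SimpleGraph.Walk.edges_cons, hq, SimpleGraph.Walk.edges_concat,
        List.toFinset_cons, List.concat_eq_append, List.toFinset_append]
      rw [hP b c r.reverse h0r hndr]
      have he0 : s(c, (0 : Fin n)) = s((0 : Fin n), c) := Sym2.eq_swap
      simp only [he0, List.toFinset_cons, List.toFinset_nil, insert_empty_eq]
      rw [Finset.union_comm, ← Finset.insert_eq]
    -- identify endpoints
    obtain ⟨i, hi⟩ := hAdj0 b h
    obtain ⟨j, hj⟩ := hAdj0 c h2
    -- b ≠ c
    have hlq : q.length = r.reverse.length + 1 := by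
      rw [hq, SimpleGraph.Walk.length_concat]
    have h3 := hc2.three_le_length
    rw [SimpleGraph.Walk.length_cons, hlq] at h3
    have hbc : b ≠ c := by
      intro e
      have := hnil b (r.reverse.copy rfl e.symm) (by rwa [SimpleGraph.Walk.support_copy])
      rw [SimpleGraph.Walk.length_copy] at this
      omega
    have hij0 : i ≠ j := by
      intro e
      rw [hi, hj, e] at hbc
      exact hbc rfl
    rcases lt_or_gt_of_ne hij0 with hij | hij
    · refine ⟨i, j, hij, ?_⟩
      have hab : (a i).val < (a j).val := hmono hij
      rw [hedgeset, hE, hi, hj, eseg]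
      have hmin : min (a i).val (a j).val = (a i).val := by omega
      have hmax : max (a i).val (a j).val = (a j).val := by omega
      rw [hmin, hmax]
    · refine ⟨j, i, hij, ?_⟩
      have hab : (a j).val < (a i).val := hmono hij
      rw [hedgeset, hE, hi, hj, eseg]
      have hmin : min (a i).val (a j).val = (a j).val := by omega
      have hmax : max (a i).val (a j).val = (a i).val := by omega
      rw [hmin, hmax, Finset.insert_comm]
  -- cardinality of the candidate edge sets
  have hcardcand : ∀ i j : Fin k, i < j →
      (insert s((0 : Fin n), a i) (insert s((0 : Fin n), a j)
        ((Finset.Ico (a i).val (a j).val).image (pe n)))).card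
        = (a j).val - (a i).val + 2 := by
    intro i j hij
    have hab : (a i).val < (a j).val := hmono hij
    have hjn : (a j).val ≤ n - 1 := by have := (a j).isLt; omega
    have hnm : ∀ z : Fin n, s((0 : Fin n), z) ∉
        (Finset.Ico (a i).val (a j).val).image (pe n) :=
      fun z => hseg0 _ _ (ha1 i) hjn z
    have hne2 : s((0 : Fin n), a i) ≠ s((0 : Fin n), a j) := by
      intro e
      rw [Sym2.eq_iff] at e
      rcases e with ⟨-, e⟩ | ⟨e1, -⟩
      · exact absurd (hmono.injective e) (Fin.ne_of_lt hij)
      · exact hane0 j e1.symm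
    rw [Finset.card_insert_of_notMem (by
        rw [Finset.mem_insert]
        rintro (e | e)
        · exact hne2 e
        · exact hnm _ e),
      Finset.card_insert_of_notMem (hnm _), hEcard _ _ hjn]
  -- conclusion
  intro s t hs ht hcardeq
  obtain ⟨u, w, hw, rfl⟩ := hs
  obtain ⟨u', w', hw', rfl⟩ := ht
  obtain ⟨i, j, hij, hs'⟩ := hcand u w hw
  obtain ⟨i', j', hij', ht'⟩ := hcand u' w' hw'
  rw [hs', ht'] at hcardeq ⊢
  rw [hcardcand i j hij, hcardcand i' j' hij'] at hcardeq
  have hab : (a i).val < (a j).val := hmono hij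
  have hab' : (a i').val < (a j').val := hmono hij'
  have hd : (a j).val - (a i).val = (a j').val - (a i').val := by omega
  obtain ⟨rfl, rfl⟩ := hsidon i j i' j' hij hij' hd
  rfl
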